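/- If (A, A*) is a Leonard pair on a vector space V of dimension at least 2, then A·A* ≠ A*·A. -/

import Mathlib

/-- A square matrix is irreducible tridiagonal: nonzero entries lie within
distance one of the diagonal, and all sub- and superdiagonal entries are nonzero. -/
def IsIrreducibleTridiagonal {K : Type*} [Field K] {n : ℕ}
    (M : Matrix (Fin n) (Fin n) K) : Prop :=
  (∀ i j : Fin n, ((i : ℕ) + 1 < j ∨ (j : ℕ) + 1 < i) → M i j = 0) ∧
  (∀ i j : Fin n, ((i : ℕ) + 1 = j ∨ (j : ℕ) + 1 = i) → M i j ≠ 0)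

/-- A Leonard pair. -/
def IsLeonardPair {K V : Type*} [Field K] [AddCommGroup V] [Module K V]
    (A B : Module.End K V) : Prop :=
  ∃ (n : ℕ) (b c : Module.Basis (Fin n) K V),
    IsIrreducibleTridiagonal (LinearMap.toMatrix b b A) ∧
    (LinearMap.toMatrix b b B).IsDiag ∧
    IsIrreducibleTridiagonal (LinearMap.toMatrix c c B) ∧
    (LinearMap.toMatrix c c A).IsDiag

theorem stmt_18 {K V : Type*} [Field K] [AddCommGroup V] [Module K V]
    [FiniteDimensional K V] (hV : 2 ≤ Module.finrank K V)
    (A B : Module.End K V) (hLP : IsLeonardPair A B) :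
    A * B ≠ B * A := by
  intro h
  obtain ⟨n, b, c, hAtri, hBdiag, hBtri, hAdiag⟩ := hLP
  have hn : Module.finrank K V = n := by
    rw [Module.finrank_eq_card_basis b, Fintype.card_fin]
  rw [hn] at hV
  set MA := LinearMap.toMatrix b b A with hMA
  set MB := LinearMap.toMatrix b b B with hMB
  have hcomm : MA * MB = MB * MA := by
    rw [hMA, hMB, ← LinearMap.toMatrix_mul, ← LinearMap.toMatrix_mul, h]
  have hadj : ∀ i j : Fin n, (i : ℕ) + 1 = j → MB i i = MB j j := by
    intro i j hij
    have h1 : (MA * MB) i j = MA i j * MB j j := by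
      rw [Matrix.mul_apply]
      refine Finset.sum_eq_single j (fun k _ hk => ?_) (fun hk => absurd (Finset.mem_univ j) hk)
      rw [hBdiag hk, mul_zero]
    have h2 : (MB * MA) i j = MB i i * MA i j := by
      rw [Matrix.mul_apply]
      refine Finset.sum_eq_single i (fun k _ hk => ?_) (fun hk => absurd (Finset.mem_univ i) hk)
      rw [hBdiag (Ne.symm hk), zero_mul]
    have hne : MA i j ≠ 0 := hAtri.2 i j (Or.inl hij)
    have key : MA i j * MB j j = MA i j * MB i i := by
      rw [h1.symm, hcomm, h2, mul_comm]
    exact (mul_left_cancel₀ hne key).symm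
  have h0 : (0 : ℕ) < n := by omega
  have hall : ∀ m (hm : m < n), MB ⟨m, hm⟩ ⟨m, hm⟩ = MB ⟨0, h0⟩ ⟨0, h0⟩ := by
    intro m
    induction m with
    | zero => intro hm; rfl
    | succ k ih =>
      intro hm
      have hk : k < n := by omega
      rw [← hadj ⟨k, hk⟩ ⟨k + 1, hm⟩ rfl, ih hk]
  set d := MB ⟨0, h0⟩ ⟨0, h0⟩ with hd
  have hMBd : MB = d • (1 : Matrix (Fin n) (Fin n) K) := by
    ext i j
    by_cases hij : i = j
    · subst hij
      simp only [Matrix.smul_apply, Matrix.one_apply_eq, smul_eq_mul, mul_one]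
      exact hall i.val i.isLt
    · rw [hBdiag hij, Matrix.smul_apply, Matrix.one_apply_ne hij, smul_zero]
  have hB : B = d • (1 : Module.End K V) := by
    apply (LinearMap.toMatrix b b).injective
    rw [← hMB, hMBd, map_smul, LinearMap.toMatrix_one]
  have hcB : LinearMap.toMatrix c c B = d • (1 : Matrix (Fin n) (Fin n) K) := by
    rw [hB, map_smul, LinearMap.toMatrix_one]
  have h01 : (1 : ℕ) < n := by omega
  have hne : LinearMap.toMatrix c c B ⟨0, h0⟩ ⟨1, h01⟩ ≠ 0 := hBtri.2 _ _ (Or.inl rfl)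
  apply hne
  rw [hcB, Matrix.smul_apply, Matrix.one_apply_ne (by simp [Fin.ext_iff]), smul_zero]
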